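/- Let g*(θ) = (1/2)·[1 + sin(πθ/2)] for θ ∈ [−1, 1]. Then for every θ ∈ (−1, 1), g*′(θ)² / (g*(θ)(1 − g*(θ))) = π²/4. Consequently, for a network of N sensors whose binary quantizer outputs have response probability g*(θ) and conditionally independent outputs, the data contribution to the Fisher information equals N·π²/4, and the corresponding Cramér–Rao lower bound is 4/(N·π²). -/

import Mathlib

lemma sine_quantizer_deriv (g : ℝ → ℝ)
    (hg : ∀ θ, g θ = (1 / 2) * (1 + Real.sin (Real.pi * θ / 2))) (θ : ℝ) :
    deriv g θ = Real.pi / 4 * Real.cos (Real.pi * θ / 2) := by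
  have hfun : g = fun x => (1 / 2) * (1 + Real.sin (Real.pi * x / 2)) := funext hg
  rw [hfun]
  have h : HasDerivAt (fun x : ℝ => (1 / 2) * (1 + Real.sin (Real.pi * x / 2)))
      ((1 / 2) * (Real.cos (Real.pi * θ / 2) * (Real.pi / 2))) θ := by
    have h1 : HasDerivAt (fun x : ℝ => Real.pi * x / 2) (Real.pi / 2) θ := by
      simpa using (((hasDerivAt_id θ).const_mul Real.pi).div_const 2)
    have h2 := (Real.hasDerivAt_sin (Real.pi * θ / 2)).comp θ h1
    simpa using ((h2.const_add 1).const_mul (1 / 2 : ℝ))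
  rw [h.deriv]; ring

lemma sine_quantizer_key (g : ℝ → ℝ)
    (hg : ∀ θ, g θ = (1 / 2) * (1 + Real.sin (Real.pi * θ / 2)))
    (θ : ℝ) (hθ : θ ∈ Set.Ioo (-1 : ℝ) 1) :
    (deriv g θ) ^ 2 / (g θ * (1 - g θ)) = Real.pi ^ 2 / 4 := by
  obtain ⟨h1, h2⟩ := hθ
  have hpi := Real.pi_pos
  have hcos : Real.cos (Real.pi * θ / 2) > 0 := by
    apply Real.cos_pos_of_mem_Ioo
    constructor
    · nlinarith
    · nlinarith
  have hden : g θ * (1 - g θ) = Real.cos (Real.pi * θ / 2) ^ 2 / 4 := by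
    rw [hg θ]
    nlinarith [Real.sin_sq_add_cos_sq (Real.pi * θ / 2)]
  have hc : Real.cos (Real.pi * θ / 2) ≠ 0 := ne_of_gt hcos
  rw [sine_quantizer_deriv g hg, hden]
  field_simp

theorem sine_quantizer_performance_limit
    (g : ℝ → ℝ)
    (hg : ∀ θ, g θ = (1 / 2) * (1 + Real.sin (Real.pi * θ / 2))) :
    (∀ θ ∈ Set.Ioo (-1 : ℝ) 1,
        (deriv g θ) ^ 2 / (g θ * (1 - g θ)) = Real.pi ^ 2 / 4) ∧
      ∀ N : ℕ, ∀ θ ∈ Set.Ioo (-1 : ℝ) 1,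
        (N : ℝ) * ((deriv g θ) ^ 2 / (g θ * (1 - g θ))) = (N : ℝ) * Real.pi ^ 2 / 4 ∧
          1 / ((N : ℝ) * ((deriv g θ) ^ 2 / (g θ * (1 - g θ))))
            = 4 / ((N : ℝ) * Real.pi ^ 2) := by
  refine ⟨fun θ hθ => sine_quantizer_key g hg θ hθ, fun N θ hθ => ?_⟩
  rw [sine_quantizer_key g hg θ hθ]
  refine ⟨by ring, ?_⟩
  rcases Nat.eq_zero_or_pos N with h | h
  · simp [h]
  · have hN : (N : ℝ) ≠ 0 := Nat.cast_ne_zero.mpr h.ne'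
    have hpi : Real.pi ≠ 0 := Real.pi_ne_zero
    field_simp
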